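/- Fix T > 0, σ ∈ ℝ, R ∈ (0,1], t₀ ∈ [0,T), and let α(t) = λ e^{-ρ t} + (1-λ) e^{-γ t} with γ > ρ > 0 and λ ∈ (0,1). Define Q(s) = e^{-σ²(T-s)}/α(T-t₀) + ∫_s^T (1-R) e^{-σ²(r-s)}/(α(r-t₀) R) dr for s ∈ [t₀,T]. Then Q(s) > 0 for all s ∈ [t₀,T], and the function P(s) = 1/Q(s) is differentiable, strictly positive on [t₀,T], and satisfies the time-dependent Riccati equation P'(s) + σ² P(s) - ((1-R)/(α(s-t₀) R)) P(s)² = 0 for s ∈ [t₀,T] with terminal condition P(T) = α(T-t₀). -/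

import Mathlib

open Real Set

/-- With `T > 0`, `σ ∈ ℝ`, `R ∈ (0,1]`, `t₀ ∈ [0,T)`, and the
quasi-hyperbolic discount `α(t) = λ e^{-ρt} + (1-λ) e^{-γt}`, the function
`Q(s) = e^{-σ²(T-s)}/α(T-t₀) + ∫_s^T (1-R) e^{-σ²(r-s)}/(α(r-t₀) R) dr` is
positive on `[t₀,T]`, and `P = 1/Q` is differentiable, strictly positive on
`[t₀,T]`, and solves `P'(s) + σ² P(s) - ((1-R)/(α(s-t₀) R)) P(s)² = 0` with
`P(T) = α(T-t₀)`. -/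
theorem zero_sum_precommitment_riccati
    (T σ R t₀ ρ γ l : ℝ) (hT : 0 < T) (hR0 : 0 < R) (hR1 : R ≤ 1)
    (ht₀ : t₀ ∈ Set.Ico (0 : ℝ) T)
    (hρ : 0 < ρ) (hργ : ρ < γ) (hl0 : 0 < l) (hl1 : l < 1)
    (α : ℝ → ℝ)
    (hα : α = fun t : ℝ => l * Real.exp (-ρ * t) + (1 - l) * Real.exp (-γ * t))
    (Q : ℝ → ℝ)
    (hQ : Q = fun s : ℝ =>
      Real.exp (-σ ^ 2 * (T - s)) / α (T - t₀)
        + ∫ r in s..T, (1 - R) * Real.exp (-σ ^ 2 * (r - s)) / (α (r - t₀) * R)) :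
    (∀ s ∈ Set.Icc t₀ T, 0 < Q s) ∧
    (∃ P' : ℝ → ℝ, ∀ s ∈ Set.Icc t₀ T,
      HasDerivAt (fun s' : ℝ => 1 / Q s') (P' s) s ∧
      0 < 1 / Q s ∧
      P' s + σ ^ 2 * (1 / Q s) - ((1 - R) / (α (s - t₀) * R)) * (1 / Q s) ^ 2 = 0) ∧
    1 / Q T = α (T - t₀) := by
  have hα_pos : ∀ t : ℝ, 0 < α t := by
    intro t
    rw [hα]
    have h1 : 0 < l * Real.exp (-ρ * t) := mul_pos hl0 (Real.exp_pos _)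
    have h2 : 0 < (1 - l) * Real.exp (-γ * t) := mul_pos (by linarith) (Real.exp_pos _)
    exact add_pos h1 h2
  have hα_cont : Continuous α := by
    rw [hα]
    continuity
  set f : ℝ → ℝ := fun r => (1 - R) * Real.exp (-σ ^ 2 * r) / (α (r - t₀) * R) with hf
  have hden_pos : ∀ r : ℝ, 0 < α (r - t₀) * R := fun r => mul_pos (hα_pos _) hR0
  have hf_cont : Continuous f := by
    apply Continuous.div
    · continuity
    · exact (hα_cont.comp (by continuity)).mul continuous_const
    · exact fun r => ne_of_gt (hden_pos r)
  have hf_nonneg : ∀ r : ℝ, 0 ≤ f r := by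
    intro r
    exact div_nonneg (mul_nonneg (by linarith) (Real.exp_pos _).le) (hden_pos r).le
  set G : ℝ → ℝ := fun s => Real.exp (-σ ^ 2 * T) / α (T - t₀) + ∫ r in s..T, f r with hG
  have hQG : ∀ s : ℝ, Q s = Real.exp (σ ^ 2 * s) * G s := by
    intro s
    rw [hQ, hG]
    simp only
    rw [mul_add]
    congr 1
    · rw [mul_div_assoc', ← Real.exp_add]
      ring_nf
    · rw [← intervalIntegral.integral_const_mul]
      apply intervalIntegral.integral_congr
      intro r _
      simp only [hf]
      rw [show -σ ^ 2 * (r - s) = σ ^ 2 * s + -σ ^ 2 * r by ring, Real.exp_add]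
      ring
  have hG_pos : ∀ s : ℝ, s ≤ T → 0 < G s := by
    intro s hs
    have h1 : 0 < Real.exp (-σ ^ 2 * T) / α (T - t₀) :=
      div_pos (Real.exp_pos _) (hα_pos _)
    have h2 : 0 ≤ ∫ r in s..T, f r :=
      intervalIntegral.integral_nonneg hs (fun u _ => hf_nonneg u)
    rw [hG]
    positivity
  have hQ_pos : ∀ s ∈ Set.Icc t₀ T, 0 < Q s := by
    intro s hs
    rw [hQG s]
    exact mul_pos (Real.exp_pos _) (hG_pos s hs.2)
  have hG_deriv : ∀ s : ℝ, HasDerivAt G (-(f s)) s := by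
    intro s
    have h1 : HasDerivAt (fun u => ∫ r in T..u, f r) (f s) s :=
      intervalIntegral.integral_hasDerivAt_right (hf_cont.intervalIntegrable T s)
        (hf_cont.stronglyMeasurableAtFilter _ _) hf_cont.continuousAt
    have h2 : HasDerivAt (fun u => Real.exp (-σ ^ 2 * T) / α (T - t₀)
        + -∫ r in T..u, f r) (-(f s)) s := (h1.neg).const_add _
    convert h2 using 2 with u
    rw [hG]
    simp only
    rw [intervalIntegral.integral_symm]
  have hQ_deriv : ∀ s : ℝ,
      HasDerivAt Q (σ ^ 2 * Q s - Real.exp (σ ^ 2 * s) * f s) s := by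
    intro s
    have hE : HasDerivAt (fun x : ℝ => Real.exp (σ ^ 2 * x)) (σ ^ 2 * Real.exp (σ ^ 2 * s)) s := by
      have h := ((hasDerivAt_id s).const_mul (σ ^ 2)).exp
      simpa [mul_comm] using h
    have h := hE.mul (hG_deriv s)
    have hQfun : Q = fun s => Real.exp (σ ^ 2 * s) * G s := funext hQG
    rw [hQfun]
    exact h.congr_deriv (by ring)
  refine ⟨hQ_pos, ⟨fun s => -(σ ^ 2 * Q s - Real.exp (σ ^ 2 * s) * f s) / Q s ^ 2, ?_⟩, ?_⟩
  · intro s hs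
    have hQs := hQ_pos s hs
    have hne : Q s ≠ 0 := ne_of_gt hQs
    have hderiv : HasDerivAt (fun s' : ℝ => 1 / Q s')
        (-(σ ^ 2 * Q s - Real.exp (σ ^ 2 * s) * f s) / Q s ^ 2) s := by
      have h : HasDerivAt (fun y => (Q y)⁻¹) _ s := (hQ_deriv s).inv hne
      simpa [one_div] using h
    refine ⟨hderiv, by positivity, ?_⟩
    have hFE : (1 - R) / (α (s - t₀) * R) = f s * Real.exp (σ ^ 2 * s) := by
      simp only [hf]
      rw [div_mul_eq_mul_div, mul_assoc, ← Real.exp_add]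
      ring_nf
      simp [Real.exp_zero]
    rw [hFE]
    field_simp
    ring
  · rw [hQ]
    simp only [sub_self, mul_zero, Real.exp_zero, intervalIntegral.integral_same, add_zero]
    rw [one_div_one_div]
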